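/- Let Γ be an (n,k,t)-graph that is a disjoint union of cliques, with A the union of components with fewer than t vertices and B the union of components with at least t vertices. Then k - 1 ≥ (t-1)·c(B) + |V(A)|, where c(B) is the number of components of B. -/

import Mathlib

open SimpleGraph

/-- `G` is a graph in which every set of `k` vertices contains a clique on `t` vertices. -/
def CliqueInEveryK {V : Type*} [DecidableEq V] (G : SimpleGraph V) (k t : ℕ) : Prop :=
  ∀ s : Finset V, s.card = k → ∃ c ⊆ s, G.IsNClique t c

/-- Every connected component of `G` is a complete graph. -/
def IsDisjointUnionOfCliques {V : Type*} (G : SimpleGraph V) : Prop :=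
  ∀ u v : V, G.Reachable u v → u ≠ v → G.Adj u v

/-- The number of components of `Γ` having at least `t` vertices (the components of `B`). -/
noncomputable def numBigComponents {V : Type*} (Γ : SimpleGraph V) (t : ℕ) : ℕ :=
  Nat.card {C : Γ.ConnectedComponent // t ≤ Nat.card C.supp}

/-- The number of vertices lying in components with fewer than `t` vertices (`|V(A)|`). -/
noncomputable def numSmallVertices {V : Type*} (Γ : SimpleGraph V) (t : ℕ) : ℕ :=
  Nat.card {v : V // Nat.card (Γ.connectedComponentMk v).supp < t}

/-- If `Γ` is an `(n,k,t)`-graph that is a disjoint union of cliques, then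
`k - 1 ≥ (t-1)·c(B) + |V(A)|`. -/
theorem stmt_6 {V : Type*} [Fintype V] [DecidableEq V] {n k t : ℕ}
    (hn : Fintype.card V = n) (hkn : k ≤ n) (htk : t ≤ k) (ht : 1 ≤ t)
    (Γ : SimpleGraph V) (hΓkt : CliqueInEveryK Γ k t) (hΓ : IsDisjointUnionOfCliques Γ) :
    (t - 1) * numBigComponents Γ t + numSmallVertices Γ t ≤ k - 1 := by
  classical
  by_contra hcon
  push_neg at hcon
  unfold numBigComponents numSmallVertices at hcon
  unfold CliqueInEveryK at hΓkt
  -- setup finsets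
  haveI : Fintype Γ.ConnectedComponent := Fintype.ofFinite _
  set Big : Finset Γ.ConnectedComponent :=
    Finset.univ.filter (fun C => t ≤ Nat.card C.supp) with hBig
  set Small : Finset V :=
    Finset.univ.filter (fun v => Nat.card (Γ.connectedComponentMk v).supp < t) with hSmall
  have hcard1 : Nat.card {C : Γ.ConnectedComponent // t ≤ Nat.card C.supp} = Big.card := by
    rw [Nat.card_eq_fintype_card, Fintype.card_subtype]
  have hcard2 : Nat.card {v : V // Nat.card (Γ.connectedComponentMk v).supp < t}
      = Small.card := by
    rw [Nat.card_eq_fintype_card, Fintype.card_subtype]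
  -- card of supp as finset
  have hsuppcard : ∀ C : Γ.ConnectedComponent, C.supp.toFinset.card = Nat.card C.supp := by
    intro C
    rw [Set.toFinset_card, ← Nat.card_eq_fintype_card]
  -- choose t-1 vertices from each big component
  have hch : ∀ C ∈ Big, ∃ f ⊆ C.supp.toFinset, f.card = t - 1 := by
    intro C hC
    apply Finset.exists_subset_card_eq
    rw [hsuppcard]
    simp only [hBig, Finset.mem_filter] at hC
    omega
  choose! f hf1 hf2 using hch
  set U : Finset V := Small ∪ Big.biUnion f with hU
  have hmemf : ∀ C ∈ Big, ∀ v ∈ f C, Γ.connectedComponentMk v = C := by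
    intro C hC v hv
    have := hf1 C hC hv
    rw [Set.mem_toFinset] at this
    exact (ConnectedComponent.mem_supp_iff _ _).mp this
  have hdisj : Disjoint Small (Big.biUnion f) := by
    rw [Finset.disjoint_right]
    intro v hv hvs
    obtain ⟨C, hC, hvC⟩ := Finset.mem_biUnion.mp hv
    have h1 := hmemf C hC v hvC
    simp only [hSmall, Finset.mem_filter] at hvs
    simp only [hBig, Finset.mem_filter] at hC
    rw [h1] at hvs
    omega
  have hbiU : (Big.biUnion f).card = Big.card * (t - 1) := by
    rw [Finset.card_biUnion, Finset.sum_congr rfl hf2, Finset.sum_const, smul_eq_mul]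
    intro C hC D hD hne
    rw [Function.onFun, Finset.disjoint_left]
    intro v hv hv'
    exact hne ((hmemf C hC v hv).symm.trans (hmemf D hD v hv'))
  have hUcard : U.card = Small.card + Big.card * (t - 1) := by
    rw [hU, Finset.card_union_of_disjoint hdisj, hbiU]
  have hkU : k ≤ U.card := by
    rw [hUcard]
    rw [hcard1, hcard2, mul_comm] at hcon
    omega
  obtain ⟨s, hsU, hsk⟩ := Finset.exists_subset_card_eq (s := U) hkU
  obtain ⟨c, hcs, hclique⟩ := hΓkt s hsk
  have hct : c.card = t := hclique.2
  have hcne : c.Nonempty := by rw [← Finset.card_pos, hct]; omega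
  obtain ⟨v, hv⟩ := hcne
  set C0 := Γ.connectedComponentMk v with hC0
  have hsub : ∀ u ∈ c, Γ.connectedComponentMk u = C0 := by
    intro u hu
    by_cases h : u = v
    · rw [h]
    · exact ConnectedComponent.sound (hclique.1 hu hv h).reachable
  have hcC0 : c ⊆ C0.supp.toFinset := by
    intro u hu
    rw [Set.mem_toFinset]
    exact (ConnectedComponent.mem_supp_iff _ _).mpr (hsub u hu)
  by_cases hbig : t ≤ Nat.card C0.supp
  · -- big component: c ⊆ f C0
    have hC0Big : C0 ∈ Big := Finset.mem_filter.mpr ⟨Finset.mem_univ _, hbig⟩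
    have hcf : c ⊆ f C0 := by
      intro u hu
      have huU : u ∈ U := hsU (hcs hu)
      rw [hU, Finset.mem_union] at huU
      rcases huU with h | h
      · simp only [hSmall, Finset.mem_filter] at h
        rw [hsub u hu] at h
        omega
      · obtain ⟨C, hC, huC⟩ := Finset.mem_biUnion.mp h
        have : C = C0 := (hmemf C hC u huC).symm.trans (hsub u hu)
        rwa [this] at huC
    have := Finset.card_le_card hcf
    rw [hct, hf2 C0 hC0Big] at this
    omega
  · -- small component
    have := Finset.card_le_card hcC0
    rw [hct, hsuppcard] at this
    omega
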